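/- Let b ≥ 2, φ = (1+√5)/2, and H(x) = ((b^2-1)^{log_b φ}/√5)·x^{log_b φ}. With h the piecewise linear function through ((b^k-1)/(b^2-1), F_k), we have limsup_{x→∞} (h(x) - H(x)) = 0. -/

import Mathlib

open Real

/-- ã_k = (b^k-1)/(b^2-1) as a real number. -/
noncomputable def atil (b k : ℕ) : ℝ := ((b : ℝ) ^ k - 1) / ((b : ℝ) ^ 2 - 1)

/-- `h` is the piecewise linear function through the points (a k, y k), k ≥ 0. -/
def IsPLThrough (a y : ℕ → ℝ) (h : ℝ → ℝ) : Prop :=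
  ∀ k : ℕ, ∀ x ∈ Set.Icc (a k) (a (k + 1)),
    h x = y k + (x - a k) * (y (k + 1) - y k) / (a (k + 1) - a k)

/-- limsup_{x→∞} (h(x) - H(x)) = 0 where H(x) = ((b²-1)^{log_b φ}/√5)·x^{log_b φ}. -/
theorem stmt17 (b : ℕ) (hb : 2 ≤ b) (h H : ℝ → ℝ)
    (hh : IsPLThrough (atil b) (fun k => (Nat.fib k : ℝ)) h)
    (hH : ∀ x : ℝ, H x = ((b : ℝ) ^ 2 - 1) ^ (Real.log goldenRatio / Real.log b)
      / Real.sqrt 5 * x ^ (Real.log goldenRatio / Real.log b)) :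
    Filter.limsup (fun x : ℝ => h x - H x) Filter.atTop = 0 := by
  classical
  set B : ℝ := (b : ℝ) with hBdef
  have hB2le : (2 : ℝ) ≤ B := by rw [hBdef]; exact_mod_cast hb
  have hB : (1 : ℝ) < B := by linarith
  have hB0 : (0 : ℝ) < B := by linarith
  set α : ℝ := Real.log goldenRatio / Real.log B with hαdef
  have hlogB : 0 < Real.log B := Real.log_pos hB
  have hα0 : 0 < α := div_pos (Real.log_pos one_lt_goldenRatio) hlogB
  have hα1 : α < 1 := by
    rw [hαdef, div_lt_one hlogB]
    exact Real.log_lt_log goldenRatio_pos (lt_of_lt_of_le goldenRatio_lt_two hB2le)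
  have hφ : B ^ α = goldenRatio := by
    rw [Real.rpow_def_of_pos hB0, hαdef, mul_div_cancel₀ _ hlogB.ne',
      Real.exp_log goldenRatio_pos]
  have hBk1 : ∀ k : ℕ, (1 : ℝ) ≤ B ^ k := fun k => one_le_pow₀ hB.le
  have hden : (0 : ℝ) < B ^ 2 - 1 := by nlinarith
  have hs5 : (0 : ℝ) < Real.sqrt 5 := Real.sqrt_pos.2 (by norm_num)
  -- key power identity
  have hpowk : ∀ k : ℕ, ∀ β : ℝ, ((B : ℝ) ^ k) ^ β = (B ^ β) ^ k := by
    intro k β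
    rw [← Real.rpow_natCast B k, ← Real.rpow_mul hB0.le, mul_comm,
      Real.rpow_mul hB0.le, Real.rpow_natCast]
  -- H at the nodes
  have hHnode : ∀ k : ℕ, H (atil b k) = (B ^ k - 1) ^ α / Real.sqrt 5 := by
    intro k
    have h1 : (0 : ℝ) ≤ B ^ k - 1 := by linarith [hBk1 k]
    have h2 : ((B ^ 2 - 1) : ℝ) ^ α ≠ 0 := (Real.rpow_pos_of_pos hden α).ne'
    rw [hH, atil, Real.div_rpow h1 hden.le]
    field_simp
  -- the node differences
  set D : ℕ → ℝ := fun k => (Nat.fib k : ℝ) - H (atil b k) with hDdef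
  -- D tends to 0
  have hDtendsto : Filter.Tendsto D Filter.atTop (nhds 0) := by
    have hgle : ∀ k : ℕ, goldenRatio ^ k - (B ^ k - 1) ^ α ≤ (B ^ (α - 1)) ^ k := by
      intro k
      set x : ℝ := B ^ k with hxdef
      have hx1 : (1 : ℝ) ≤ x := hBk1 k
      have hx0 : (0 : ℝ) < x := by linarith
      have hphik : goldenRatio ^ k = x ^ α := by rw [hxdef, hpowk k α, hφ]
      have hxam1 : (B ^ (α - 1)) ^ k = x ^ (α - 1) := (hpowk k (α - 1)).symm
      rw [hphik, hxam1]
      -- show x^α - (x-1)^α ≤ x^(α-1)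
      have ht : x - 1 = x * (1 - 1 / x) := by field_simp
      have ht0 : 0 ≤ 1 - 1 / x := by
        have : 1 / x ≤ 1 := by rw [div_le_one hx0]; exact hx1
        linarith
      have ht1 : 1 - 1 / x ≤ 1 := by
        have : 0 ≤ 1 / x := by positivity
        linarith
      have hta : 1 - 1 / x ≤ (1 - 1 / x) ^ α := by
        rcases eq_or_lt_of_le ht0 with h0 | h0
        · rw [← h0, Real.zero_rpow hα0.ne']
        · calc 1 - 1 / x = (1 - 1/x) ^ (1:ℝ) := (Real.rpow_one _).symm
            _ ≤ (1 - 1/x) ^ α := Real.rpow_le_rpow_of_exponent_ge h0 ht1 hα1.le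
      have key : x ^ α * (1 - 1 / x) ≤ (x - 1) ^ α := by
        rw [ht, Real.mul_rpow hx0.le ht0]
        exact mul_le_mul_of_nonneg_left hta (Real.rpow_nonneg hx0.le α)
      have hxam1' : x ^ (α - 1) = x ^ α / x := by
        rw [Real.rpow_sub hx0, Real.rpow_one]
      have hexp : x ^ α * (1 - 1 / x) = x ^ α - x ^ (α - 1) := by
        rw [hxam1']; field_simp
      linarith [key, hexp.symm.le]
    have hg0 : ∀ k : ℕ, 0 ≤ goldenRatio ^ k - (B ^ k - 1) ^ α := by
      intro k
      have h1 : (0 : ℝ) ≤ B ^ k - 1 := by linarith [hBk1 k]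
      have : (B ^ k - 1) ^ α ≤ (B ^ k) ^ α :=
        Real.rpow_le_rpow h1 (by linarith) hα0.le
      rw [hpowk k α, hφ] at this
      linarith
    have hr1 : B ^ (α - 1) < 1 :=
      Real.rpow_lt_one_of_one_lt_of_neg hB (by linarith)
    have hr0 : 0 ≤ B ^ (α - 1) := Real.rpow_nonneg hB0.le _
    have hgtendsto :
        Filter.Tendsto (fun k => goldenRatio ^ k - (B ^ k - 1) ^ α)
          Filter.atTop (nhds 0) :=
      squeeze_zero hg0 hgle (tendsto_pow_atTop_nhds_zero_of_lt_one hr0 hr1)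
    have hψ : Filter.Tendsto (fun k : ℕ => goldenConj ^ k) Filter.atTop (nhds 0) := by
      apply tendsto_pow_atTop_nhds_zero_of_abs_lt_one
      rw [abs_lt]
      constructor
      · exact neg_one_lt_goldenConj
      · linarith [goldenConj_neg]
    have heq : D = fun k =>
        ((goldenRatio ^ k - (B ^ k - 1) ^ α) - goldenConj ^ k) / Real.sqrt 5 := by
      funext k
      rw [hDdef]
      simp only
      rw [hHnode k, Real.coe_fib_eq]
      ring
    rw [heq]
    have : Filter.Tendsto
        (fun k => ((goldenRatio ^ k - (B ^ k - 1) ^ α) - goldenConj ^ k) / Real.sqrt 5)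
        Filter.atTop (nhds ((0 - 0) / Real.sqrt 5)) :=
      (hgtendsto.sub hψ).div_const _
    simpa using this
  -- monotonicity of the nodes
  have ha_lt : ∀ k : ℕ, atil b k < atil b (k + 1) := by
    intro k
    apply div_lt_div_of_pos_right _ hden
    have : B ^ k < B ^ (k + 1) := pow_lt_pow_right₀ hB (Nat.lt_succ_self k)
    linarith
  have ha_mono : StrictMono (atil b) := strictMono_nat_of_lt_succ ha_lt
  have ha0 : ∀ k : ℕ, 0 ≤ atil b k := by
    intro k
    exact div_nonneg (by linarith [hBk1 k]) hden.le
  -- h at the nodes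
  have hnode : ∀ k : ℕ, h (atil b k) = (Nat.fib k : ℝ) := by
    intro k
    have := hh k (atil b k) ⟨le_refl _, (ha_lt k).le⟩
    simpa using this
  -- a → ∞
  have ha_tendsto : Filter.Tendsto (atil b) Filter.atTop Filter.atTop := by
    have h1 : Filter.Tendsto (fun k : ℕ => B ^ k) Filter.atTop Filter.atTop :=
      tendsto_pow_atTop_atTop_of_one_lt hB
    have h2 : Filter.Tendsto (fun k : ℕ => B ^ k - 1) Filter.atTop Filter.atTop := by
      simpa [sub_eq_add_neg] using Filter.tendsto_atTop_add_const_right Filter.atTop (-1) h1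
    exact Filter.Tendsto.atTop_div_const hden h2
  -- concavity bound on each interval
  have hinterval : ∀ k : ℕ, ∀ x ∈ Set.Icc (atil b k) (atil b (k + 1)),
      h x - H x ≤ max (D k) (D (k + 1)) := by
    intro k x hx
    set a₀ := atil b k
    set a₁ := atil b (k + 1)
    have hΔ : 0 < a₁ - a₀ := by linarith [ha_lt k]
    set t : ℝ := (x - a₀) / (a₁ - a₀) with htdef
    have ht0 : 0 ≤ t := div_nonneg (by linarith [hx.1]) hΔ.le
    have ht1 : t ≤ 1 := by
      rw [htdef, div_le_one hΔ]; linarith [hx.2]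
    have hxeq : x = (1 - t) * a₀ + t * a₁ := by
      have : t * (a₁ - a₀) = x - a₀ := by
        rw [htdef, div_mul_cancel₀ _ hΔ.ne']
      nlinarith [this]
    have hhx : h x = (1 - t) * (Nat.fib k : ℝ) + t * (Nat.fib (k + 1) : ℝ) := by
      rw [hh k x hx]
      have : (x - a₀) * ((Nat.fib (k+1) : ℝ) - (Nat.fib k : ℝ)) / (a₁ - a₀)
          = t * ((Nat.fib (k+1) : ℝ) - (Nat.fib k : ℝ)) := by
        rw [htdef]; ring
      rw [this]; ring
    -- concavity of H
    set C : ℝ := (B ^ 2 - 1) ^ α / Real.sqrt 5 with hCdef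
    have hC0 : 0 ≤ C := div_nonneg (Real.rpow_nonneg hden.le α) hs5.le
    have hconc : ConcaveOn ℝ (Set.Ici 0) (fun y : ℝ => C • y ^ α) :=
      (Real.concaveOn_rpow hα0.le hα1.le).smul hC0
    have hkey := hconc.2 (Set.mem_Ici.2 (ha0 k)) (Set.mem_Ici.2 (ha0 (k + 1)))
      (by linarith : (0:ℝ) ≤ 1 - t) ht0 (by ring)
    simp only [smul_eq_mul] at hkey
    have hHx : H x = C * x ^ α := by rw [hH x, hCdef]
    have hHa₀ : H a₀ = C * a₀ ^ α := by rw [hH a₀, hCdef]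
    have hHa₁ : H a₁ = C * a₁ ^ α := by rw [hH a₁, hCdef]
    have hHge : (1 - t) * H a₀ + t * H a₁ ≤ H x := by
      rw [hHx, hHa₀, hHa₁, hxeq]
      exact hkey
    have hD0 : D k ≤ max (D k) (D (k + 1)) := le_max_left _ _
    have hD1 : D (k + 1) ≤ max (D k) (D (k + 1)) := le_max_right _ _
    have e0 : (1 - t) * D k ≤ (1 - t) * max (D k) (D (k + 1)) :=
      mul_le_mul_of_nonneg_left hD0 (by linarith)
    have e1 : t * D (k + 1) ≤ t * max (D k) (D (k + 1)) :=
      mul_le_mul_of_nonneg_left hD1 ht0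
    have : h x - H x ≤ (1 - t) * D k + t * D (k + 1) := by
      rw [hhx, hDdef]
      simp only
      nlinarith [hHge]
    calc h x - H x ≤ (1 - t) * D k + t * D (k + 1) := this
      _ ≤ (1 - t) * max (D k) (D (k + 1)) + t * max (D k) (D (k + 1)) := by linarith
      _ = max (D k) (D (k + 1)) := by ring
  -- eventually bound: for every ε > 0 eventually h x - H x ≤ ε
  have hev : ∀ ε : ℝ, 0 < ε → ∀ᶠ x in Filter.atTop, h x - H x ≤ ε := by
    intro ε hε
    obtain ⟨N, hN⟩ := Filter.eventually_atTop.1 (hDtendsto.eventually_lt_const hε)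
    filter_upwards [Filter.eventually_ge_atTop (atil b N)] with x hx
    obtain ⟨M, hM⟩ := (ha_tendsto.eventually_gt_atTop x).exists
    have hNM : N < M := by
      by_contra hc
      push_neg at hc
      have := ha_mono.monotone hc
      linarith
    set k := Nat.findGreatest (fun j => atil b j ≤ x) M with hkdef
    have hkN : N ≤ k := Nat.le_findGreatest hNM.le hx
    have hkx : atil b k ≤ x := Nat.findGreatest_spec (P := fun j => atil b j ≤ x) hNM.le hx
    have hkM : k ≤ M := Nat.findGreatest_le M
    have hkltM : k < M := by
      rcases lt_or_eq_of_le hkM with h' | h'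
      · exact h'
      · exfalso; rw [h'] at hkx; linarith
    have hxk1 : x < atil b (k + 1) := by
      by_contra hc
      push_neg at hc
      exact Nat.findGreatest_is_greatest (P := fun j => atil b j ≤ x) (Nat.lt_succ_self k) hkltM hc
    have hbound := hinterval k x ⟨hkx, hxk1.le⟩
    calc h x - H x ≤ max (D k) (D (k + 1)) := hbound
      _ ≤ ε := max_le (hN k hkN).le (hN (k + 1) (by omega)).le
  -- frequently bound: for every ε > 0 frequently h x - H x ≥ -ε
  have hfr : ∀ ε : ℝ, 0 < ε → ∃ᶠ x in Filter.atTop, -ε ≤ h x - H x := by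
    intro ε hε
    rw [Filter.frequently_atTop]
    intro X
    obtain ⟨N₁, hN₁⟩ := Filter.eventually_atTop.1
      (hDtendsto.eventually_const_lt (by linarith : -ε < (0:ℝ)))
    obtain ⟨N₂, hN₂⟩ := Filter.eventually_atTop.1 (ha_tendsto.eventually_ge_atTop X)
    refine ⟨atil b (max N₁ N₂), hN₂ _ (le_max_right _ _), ?_⟩
    have : h (atil b (max N₁ N₂)) - H (atil b (max N₁ N₂)) = D (max N₁ N₂) := by
      rw [hDdef]; simp only; rw [hnode]
    rw [this]
    exact (hN₁ _ (le_max_left _ _)).le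
  -- boundedness instances
  have hbdd : Filter.IsBoundedUnder (· ≤ ·) Filter.atTop (fun x : ℝ => h x - H x) :=
    Filter.isBoundedUnder_of_eventually_le (hev 1 one_pos)
  have hcob : Filter.IsCoboundedUnder (· ≤ ·) Filter.atTop (fun x : ℝ => h x - H x) :=
    Filter.IsCoboundedUnder.of_frequently_ge (hfr 1 one_pos)
  apply le_antisymm
  · -- limsup ≤ 0
    apply le_of_forall_pos_le_add
    intro ε hε
    have := Filter.limsup_le_of_le hcob (hev ε hε)
    linarith
  · -- 0 ≤ limsup
    apply le_of_forall_pos_le_add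
    intro ε hε
    have := Filter.le_limsup_of_frequently_le (hfr ε hε) hbdd
    linarith
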